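/- Let A be a stationary subset of ω₁ such that ω₁ \ A is also stationary, and let T be the tree of closed (in the order topology) subsets of A ordered by 'initial segment'. Then every branch of T is countable. -/

import Mathlib

open Set

/-- The first uncountable ordinal `ω₁`. -/
noncomputable def omega1 : Ordinal := (Cardinal.aleph 1).ord

/-- A set of ordinals is a closed subset of `ω₁` if it is contained in `[0, ω₁)` and is closed
in `[0, ω₁)` with the (subspace of the) order topology. -/
def ClosedInOmega1 (K : Set Ordinal) : Prop :=
  K ⊆ Set.Iio omega1 ∧ IsClosed (Subtype.val ⁻¹' K : Set (Set.Iio omega1))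

/-- A club in `ω₁`: a closed and unbounded subset of `[0, ω₁)`. -/
def ClubInOmega1 (C : Set Ordinal) : Prop :=
  ClosedInOmega1 C ∧ ∀ o < omega1, ∃ x ∈ C, o ≤ x

/-- A stationary subset of `ω₁`: a subset of `[0, ω₁)` meeting every club. -/
def StationaryInOmega1 (A : Set Ordinal) : Prop :=
  A ⊆ Set.Iio omega1 ∧ ∀ C : Set Ordinal, ClubInOmega1 C → (A ∩ C).Nonempty

/-- `K₁` is an initial segment of `K₂`. -/
def InitialSegOf (K₁ K₂ : Set Ordinal) : Prop :=
  K₁ ⊆ K₂ ∧ ∀ x ∈ K₁, ∀ y ∈ K₂, y ≤ x → y ∈ K₁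

section Aux

universe u

lemma omega1_isLimit : Order.IsSuccLimit omega1.{u} :=
  Cardinal.isSuccLimit_ord (Cardinal.aleph0_le_aleph 1)

lemma succ_lt_omega1 {o : Ordinal.{u}} (h : o < omega1.{u}) : o + 1 < omega1.{u} := by
  rw [Ordinal.add_one_eq_succ]
  exact omega1_isLimit.succ_lt h

lemma lt_add_one_ord (o : Ordinal.{u}) : o < o + 1 := by
  rw [Ordinal.add_one_eq_succ]; exact Order.lt_succ o

lemma countable_Iio_omega1 {o : Ordinal.{u}} (h : o < omega1.{u}) : (Set.Iio o).Countable := by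
  rw [Cardinal.countable_iff_lt_aleph_one, Ordinal.mk_Iio_ordinal]
  have h1 : o.card < Cardinal.aleph 1 := Cardinal.lt_ord.mp h
  calc Cardinal.lift.{u+1} o.card < Cardinal.lift.{u+1} (Cardinal.aleph 1) :=
        Cardinal.lift_lt.mpr h1
    _ = Cardinal.aleph 1 := by rw [Cardinal.lift_aleph, Ordinal.lift_one]

/-- A strict upper bound of `K`. -/
noncomputable def sBound (K : Set Ordinal.{u}) : Ordinal.{u} := sSup ((fun x => x + 1) '' K)

lemma sBound_le {K : Set Ordinal.{u}} {b : Ordinal.{u}} (hb : ∀ x ∈ K, x + 1 ≤ b) :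
    sBound K ≤ b := by
  rcases K.eq_empty_or_nonempty with rfl | hne
  · simp only [sBound, Set.image_empty, csSup_empty]
    exact zero_le
  · exact csSup_le (hne.image _) (by rintro y ⟨x, hx, rfl⟩; exact hb x hx)

lemma le_sBound {K : Set Ordinal.{u}} (hK : K.Countable) {x : Ordinal.{u}} (hx : x ∈ K) :
    x + 1 ≤ sBound K := by
  have h1 : ((fun x => x + 1) '' K).Countable := hK.image _
  have := h1.to_subtype
  exact le_csSup (Ordinal.bddAbove_iff_small.mpr inferInstance) ⟨x, hx, rfl⟩

lemma sBound_lt_omega1 {K : Set Ordinal.{u}} (hK : K.Countable)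
    (hsub : K ⊆ Set.Iio omega1.{u}) : sBound K < omega1.{u} := by
  rcases K.eq_empty_or_nonempty with rfl | hne
  · simp only [sBound, Set.image_empty, csSup_empty]
    exact omega1_isLimit.pos
  · obtain ⟨f, hf⟩ := hK.exists_eq_range hne
    have heq : sBound K = ⨆ n, (f n + 1) := by
      rw [sBound, hf, ← Set.range_comp]
      rfl
    rw [heq]
    apply Ordinal.iSup_lt_ord_lift
    · show _ < (Cardinal.aleph 1).ord.cof
      rw [Cardinal.isRegular_aleph_one.cof_eq]
      simp only [Cardinal.mk_nat, Cardinal.lift_aleph0]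
      exact Cardinal.aleph0_lt_aleph_one
    · intro n
      apply succ_lt_omega1
      exact hsub (hf ▸ Set.mem_range_self n)

lemma exists_mem_of_lt_sBound {K : Set Ordinal.{u}} {o : Ordinal.{u}} (h : o < sBound K) :
    ∃ x ∈ K, o ≤ x := by
  by_contra h2
  push_neg at h2
  refine absurd (sBound_le fun x hx => ?_) h.not_ge
  rw [Ordinal.add_one_eq_succ, Order.succ_le_iff]
  exact h2 x hx

lemma mem_of_closed_iSup {K : Set Ordinal.{u}} (hK : ClosedInOmega1 K) {ι : Type u}
    (hι : Nonempty ι) (f : ι → Ordinal.{u}) (hf : ∀ i, f i ∈ K) (h : (⨆ i, f i) < omega1.{u}) :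
    (⨆ i, f i) ∈ K := by
  obtain ⟨C, hC, hpre⟩ := isClosed_induced_iff.mp hK.2
  have hmem : ∀ x : Ordinal.{u}, ∀ hx : x < omega1.{u}, (x ∈ C ↔ x ∈ K) := by
    intro x hx
    have := Set.ext_iff.mp hpre ⟨x, hx⟩
    simpa using this
  have hfC : ∀ i, f i ∈ C := by
    intro i
    have hfi : f i < omega1.{u} := hK.1 (hf i)
    exact (hmem _ hfi).mpr (hf i)
  have hσC : (⨆ i, f i) ∈ C := Ordinal.isClosed_iff_iSup.mp hC hι f hfC
  exact (hmem _ h).mp hσC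

lemma countable_of_closed_subset {A K : Set Ordinal.{u}}
    (hA' : StationaryInOmega1 (Set.Iio omega1.{u} \ A)) (hsub : K ⊆ A)
    (hK : ClosedInOmega1 K) : K.Countable := by
  by_contra hc
  have hub : ∀ o < omega1.{u}, ∃ x ∈ K, o ≤ x := by
    intro o ho
    by_contra h2
    push_neg at h2
    exact hc ((countable_Iio_omega1 ho).mono fun x hx => h2 x hx)
  obtain ⟨y, hy1, hy2⟩ := hA'.2 K ⟨hK, hub⟩
  exact hy1.2 (hsub hy2)

end Aux

/-- If `A ⊆ ω₁` is stationary with stationary complement, then every branch (maximal chain) of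
the Todorcevic tree `T` of closed subsets of `A`, ordered by "initial segment", is countable. -/
theorem stmt2 (A : Set Ordinal) (hA : StationaryInOmega1 A)
    (hA' : StationaryInOmega1 (Set.Iio omega1 \ A))
    (B : Set { K : Set Ordinal // K ⊆ A ∧ ClosedInOmega1 K })
    (hB : IsMaxChain (fun K₁ K₂ => InitialSegOf K₁.1 K₂.1) B) :
    B.Countable := by
  by_contra hBc
  have hchain := hB.1
  have hcnt : ∀ K : { K : Set Ordinal // K ⊆ A ∧ ClosedInOmega1 K }, (K.1).Countable :=
    fun K => countable_of_closed_subset hA' K.2.1 K.2.2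
  -- absorption: elements of the union below an element of a member are in that member
  have habs : ∀ K₁ ∈ B, ∀ K₂ ∈ B, ∀ u ∈ K₁.1, ∀ x ∈ K₂.1, u ≤ x → u ∈ K₂.1 := by
    intro K₁ h₁ K₂ h₂ u hu x hx hux
    rcases eq_or_ne K₁ K₂ with rfl | hne
    · exact hu
    rcases hchain h₁ h₂ hne with h | h
    · exact h.1 hu
    · exact h.2 x hx u hu hux
  -- strict monotonicity of sBound along the chain
  have hlt : ∀ K₁ K₂ : { K : Set Ordinal // K ⊆ A ∧ ClosedInOmega1 K },
      InitialSegOf K₁.1 K₂.1 → K₁ ≠ K₂ → sBound K₁.1 < sBound K₂.1 := by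
    intro K₁ K₂ hr12 hne
    obtain ⟨x, hx2, hx1⟩ : ∃ x ∈ K₂.1, x ∉ K₁.1 := by
      by_contra h
      push_neg at h
      exact hne (Subtype.ext (Set.Subset.antisymm hr12.1 h))
    have h1 : sBound K₁.1 ≤ x := by
      apply sBound_le
      intro u hu
      rw [Ordinal.add_one_eq_succ, Order.succ_le_iff]
      rcases lt_or_ge u x with h' | h'
      · exact h'
      · exact absurd (hr12.2 u hu x hx2 h') hx1
    calc sBound K₁.1 ≤ x := h1
      _ < x + 1 := lt_add_one_ord x
      _ ≤ sBound K₂.1 := le_sBound (hcnt K₂) hx2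
  have hsb_lt : ∀ K : { K : Set Ordinal // K ⊆ A ∧ ClosedInOmega1 K },
      sBound K.1 < omega1 := fun K => sBound_lt_omega1 (hcnt K) fun x hx => hA.1 (K.2.1 hx)
  -- the bounds are unbounded in ω₁
  have hunb : ∀ o < omega1, ∃ K ∈ B, o < sBound K.1 := by
    intro o ho
    by_contra h
    push_neg at h
    apply hBc
    have hIio : (Set.Iio (o + 1)).Countable := countable_Iio_omega1 (succ_lt_omega1 ho)
    have : Countable (Set.Iio (o + 1)) := hIio.to_subtype
    rw [← Set.countable_coe_iff]
    have hinj : Function.Injective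
        (fun K : ↥B => (⟨sBound K.1.1, (h K.1 K.2).trans_lt (lt_add_one_ord o)⟩ :
          ↥(Set.Iio (o + 1)))) := by
      intro K₁ K₂ he
      have heq : sBound K₁.1.1 = sBound K₂.1.1 := congrArg Subtype.val he
      by_contra hne
      have hne' : K₁.1 ≠ K₂.1 := fun h' => hne (Subtype.ext h')
      rcases hchain K₁.2 K₂.2 hne' with h' | h'
      · exact absurd heq (hlt _ _ h' hne').ne
      · exact absurd heq.symm (hlt _ _ h' hne'.symm).ne
    exact hinj.countable
  -- the union of the branch
  set U : Set Ordinal := ⋃ K ∈ B, K.1 with hU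
  have hUA : U ⊆ A := by
    intro x hx
    obtain ⟨K, hKB, hxK⟩ := Set.mem_iUnion₂.mp hx
    exact K.2.1 hxK
  have hUio : U ⊆ Set.Iio omega1 := hUA.trans hA.1
  have hUunb : ∀ o < omega1, ∃ x ∈ U, o ≤ x := by
    intro o ho
    obtain ⟨K, hKB, hK⟩ := hunb o ho
    obtain ⟨x, hxK, hox⟩ := exists_mem_of_lt_sBound hK
    exact ⟨x, Set.mem_biUnion hKB hxK, hox⟩
  -- U together with [ω₁, ∞) is closed
  have hV : IsClosed (U ∪ Set.Ici omega1) := by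
    rw [Ordinal.isClosed_iff_iSup]
    intro ι hι f hf
    rcases lt_or_ge (⨆ i, f i) omega1 with hσ | hσ
    · have hfU : ∀ i, f i ∈ U := by
        intro i
        rcases hf i with h | h
        · exact h
        · exact absurd (h.trans (Ordinal.le_iSup f i)) hσ.not_ge
      obtain ⟨K, hKB, hK⟩ := hunb _ hσ
      obtain ⟨x, hxK, hσx⟩ := exists_mem_of_lt_sBound hK
      have hfK : ∀ i, f i ∈ K.1 := by
        intro i
        obtain ⟨K', hK'B, hfK'⟩ := Set.mem_iUnion₂.mp (hfU i)
        exact habs K' hK'B K hKB _ hfK' x hxK ((Ordinal.le_iSup f i).trans hσx)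
      exact Or.inl (Set.mem_biUnion hKB (mem_of_closed_iSup K.2.2 hι f hfK hσ))
    · exact Or.inr hσ
  have hUclosed : ClosedInOmega1 U := by
    refine ⟨hUio, ?_⟩
    rw [isClosed_induced_iff]
    refine ⟨U ∪ Set.Ici omega1, hV, ?_⟩
    ext z
    simp only [Set.mem_preimage, Set.mem_union, Set.mem_Ici]
    exact or_iff_left (not_le.mpr z.2)
  obtain ⟨y, hy1, hy2⟩ := hA'.2 U ⟨hUclosed, hUunb⟩
  exact hy1.2 (hUA hy2)
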